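/- The polynomial χ = 1 − 18x + 43x² − 18x³ + x⁴ is irreducible in Q[x], has four distinct real roots, and its splitting field E = Q[x]/(χ) is isomorphic to Q(√2, √5), which is Galois over Q with Galois group Z/2Z × Z/2Z. -/

import Mathlib

open Polynomial

namespace S7
open IntermediateField

noncomputable def χ : ℚ[X] := X ^ 4 - 18 * X ^ 3 + 43 * X ^ 2 - 18 * X + 1
noncomputable def s : ℝ := Real.sqrt 2
noncomputable def t : ℝ := Real.sqrt 5
noncomputable def r1 : ℝ := (9 + 6*s + 3*t + 2*(s*t))/2
noncomputable def r2 : ℝ := (9 + 6*s - 3*t - 2*(s*t))/2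
noncomputable def r3 : ℝ := (9 - 6*s + 3*t - 2*(s*t))/2
noncomputable def r4 : ℝ := (9 - 6*s - 3*t + 2*(s*t))/2

lemma hs : s ^ 2 = 2 := Real.sq_sqrt (by norm_num)
lemma ht : t ^ 2 = 5 := Real.sq_sqrt (by norm_num)
lemma s_pos : 0 < s := Real.sqrt_pos.mpr (by norm_num)
lemma t_pos : 0 < t := Real.sqrt_pos.mpr (by norm_num)

lemma irr_s : Irrational s := irrational_sqrt_two
lemma irr_t : Irrational t := by
  have : Nat.Prime 5 := by norm_num
  simpa [t] using this.irrational_sqrt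
lemma irr_st : Irrational (s * t) := by
  have h10 : ¬ IsSquare (10 : ℕ) := by
    rintro ⟨k, hk⟩
    rcases Nat.lt_or_ge k 4 with h | h
    · interval_cases k <;> omega
    · nlinarith
  have : s * t = Real.sqrt 10 := by
    rw [s, t, ← Real.sqrt_mul (by norm_num : (0:ℝ) ≤ 2)]
    norm_num
  rw [this]
  simpa using irrational_sqrt_natCast_iff.mpr h10

lemma fact_eq (x : ℝ) :
    x^4 - 18*x^3 + 43*x^2 - 18*x + 1 = (x - r1) * (x - r2) * (x - r3) * (x - r4) := by
  unfold r1 r2 r3 r4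
  linear_combination ((405/2 : ℝ) + (-45 : ℝ)*t^2 + (5/2 : ℝ)*t^4 + (-81 : ℝ)*s^2 + (18 : ℝ)*s^2*t^2 + (-1 : ℝ)*s^2*t^4 + (-162 : ℝ)*x + (18 : ℝ)*x*t^2 + (18 : ℝ)*x^2 + (2 : ℝ)*x^2*t^2) * hs + ((13/16 : ℝ) + (-1/16 : ℝ)*t^2 + (-9/2 : ℝ)*x + (17/2 : ℝ)*x^2) * ht

lemma d12 : r1 ≠ r2 := by
  have : r2 < r1 := by unfold r1 r2; nlinarith [hs, ht, s_pos, t_pos, mul_pos s_pos t_pos]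
  exact this.ne'
lemma d13 : r1 ≠ r3 := by
  have : r3 < r1 := by unfold r1 r3; nlinarith [hs, ht, s_pos, t_pos, mul_pos s_pos t_pos]
  exact this.ne'
lemma d14 : r1 ≠ r4 := by
  have : r4 < r1 := by unfold r1 r4; nlinarith [hs, ht, s_pos, t_pos, mul_pos s_pos t_pos]
  exact this.ne'
lemma d23 : r2 ≠ r3 := by
  have : r3 < r2 := by unfold r2 r3; nlinarith [hs, ht, s_pos, t_pos, mul_pos s_pos t_pos]
  exact this.ne'
lemma d24 : r2 ≠ r4 := by
  have : r4 < r2 := by unfold r2 r4; nlinarith [hs, ht, s_pos, t_pos, mul_pos s_pos t_pos]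
  exact this.ne'
lemma d34 : r3 ≠ r4 := by
  have : r4 < r3 := by unfold r3 r4; nlinarith [hs, ht, s_pos, t_pos, mul_pos s_pos t_pos]
  exact this.ne'

-- irrationality of the roots
lemma irr_r1 : Irrational r1 := by
  rintro ⟨q, hq⟩
  have key : (24 : ℝ)*((q:ℝ)-2)*s = (2*(q:ℝ)-9)^2-13 := by
    unfold r1 at hq
    linear_combination ((18 : ℝ) + (-6 : ℝ)*t + (12 : ℝ)*s + (-4 : ℝ)*s*t + (-4 : ℝ)*(q:ℝ)) * hq + ((36 : ℝ) + (-4 : ℝ)*t^2) * hs + ((-17 : ℝ) + (-12 : ℝ)*s) * ht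
  by_cases hq2 : q = 2
  · rw [hq2] at key; norm_num at key
  · have hden : ((q:ℝ) - 2) ≠ 0 := sub_ne_zero.mpr (by exact_mod_cast hq2)
    refine irr_s ⟨((2*q-9)^2-13)/(24*(q-2)), ?_⟩
    push_cast
    rw [div_eq_iff (by intro h; exact hden (by linarith))]
    linear_combination -key
lemma irr_r2 : Irrational r2 := by
  rintro ⟨q, hq⟩
  have key : (24 : ℝ)*((q:ℝ)-2)*s = (2*(q:ℝ)-9)^2-13 := by
    unfold r2 at hq
    linear_combination ((18 : ℝ) + (6 : ℝ)*t + (12 : ℝ)*s + (4 : ℝ)*s*t + (-4 : ℝ)*(q:ℝ)) * hq + ((36 : ℝ) + (-4 : ℝ)*t^2) * hs + ((-17 : ℝ) + (-12 : ℝ)*s) * ht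
  by_cases hq2 : q = 2
  · rw [hq2] at key; norm_num at key
  · have hden : ((q:ℝ) - 2) ≠ 0 := sub_ne_zero.mpr (by exact_mod_cast hq2)
    refine irr_s ⟨((2*q-9)^2-13)/(24*(q-2)), ?_⟩
    push_cast
    rw [div_eq_iff (by intro h; exact hden (by linarith))]
    linear_combination -key
lemma irr_r3 : Irrational r3 := by
  rintro ⟨q, hq⟩
  have key : (-24 : ℝ)*((q:ℝ)-2)*s = (2*(q:ℝ)-9)^2-13 := by
    unfold r3 at hq
    linear_combination ((18 : ℝ) + (-6 : ℝ)*t + (-12 : ℝ)*s + (4 : ℝ)*s*t + (-4 : ℝ)*(q:ℝ)) * hq + ((36 : ℝ) + (-4 : ℝ)*t^2) * hs + ((-17 : ℝ) + (12 : ℝ)*s) * ht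
  by_cases hq2 : q = 2
  · rw [hq2] at key; norm_num at key
  · have hden : ((q:ℝ) - 2) ≠ 0 := sub_ne_zero.mpr (by exact_mod_cast hq2)
    refine irr_s ⟨((2*q-9)^2-13)/(-24*(q-2)), ?_⟩
    push_cast
    rw [div_eq_iff (by intro h; exact hden (by linarith))]
    linear_combination -key
lemma irr_r4 : Irrational r4 := by
  rintro ⟨q, hq⟩
  have key : (-24 : ℝ)*((q:ℝ)-2)*s = (2*(q:ℝ)-9)^2-13 := by
    unfold r4 at hq
    linear_combination ((18 : ℝ) + (6 : ℝ)*t + (-12 : ℝ)*s + (-4 : ℝ)*s*t + (-4 : ℝ)*(q:ℝ)) * hq + ((36 : ℝ) + (-4 : ℝ)*t^2) * hs + ((-17 : ℝ) + (12 : ℝ)*s) * ht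
  by_cases hq2 : q = 2
  · rw [hq2] at key; norm_num at key
  · have hden : ((q:ℝ) - 2) ≠ 0 := sub_ne_zero.mpr (by exact_mod_cast hq2)
    refine irr_s ⟨((2*q-9)^2-13)/(-24*(q-2)), ?_⟩
    push_cast
    rw [div_eq_iff (by intro h; exact hden (by linarith))]
    linear_combination -key

-- irrationality of pairwise sums
lemma irr_sum_of_eq {x y z : ℝ} (h : Irrational z) (he : x + y = z) : Irrational (x + y) := he ▸ h
lemma irr12 : Irrational (r1 + r2) := by
  have h : Irrational (((9:ℚ):ℝ) + (6:ℚ)*s) := (irr_s.ratCast_mul (by norm_num)).ratCast_add (q := 9)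
  refine irr_sum_of_eq h ?_
  unfold r1 r2; push_cast; ring
lemma irr13 : Irrational (r1 + r3) := by
  have h : Irrational (((9:ℚ):ℝ) + (3:ℚ)*t) := (irr_t.ratCast_mul (by norm_num)).ratCast_add (q := 9)
  refine irr_sum_of_eq h ?_
  unfold r1 r3; push_cast; ring
lemma irr14 : Irrational (r1 + r4) := by
  have h : Irrational (((9:ℚ):ℝ) + (2:ℚ)*(s*t)) := (irr_st.ratCast_mul (by norm_num)).ratCast_add (q := 9)
  refine irr_sum_of_eq h ?_
  unfold r1 r4; push_cast; ring
lemma irr23 : Irrational (r2 + r3) := by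
  have h : Irrational (((9:ℚ):ℝ) + (-2:ℚ)*(s*t)) := (irr_st.ratCast_mul (by norm_num)).ratCast_add (q := 9)
  refine irr_sum_of_eq h ?_
  unfold r2 r3; push_cast; ring
lemma irr24 : Irrational (r2 + r4) := by
  have h : Irrational (((9:ℚ):ℝ) + (-3:ℚ)*t) := (irr_t.ratCast_mul (by norm_num)).ratCast_add (q := 9)
  refine irr_sum_of_eq h ?_
  unfold r2 r4; push_cast; ring
lemma irr34 : Irrational (r3 + r4) := by
  have h : Irrational (((9:ℚ):ℝ) + (-6:ℚ)*s) := (irr_s.ratCast_mul (by norm_num)).ratCast_add (q := 9)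
  refine irr_sum_of_eq h ?_
  unfold r3 r4; push_cast; ring
lemma irr11 : Irrational (r1 + r1) := by
  have h : Irrational ((2:ℚ)*r1) := irr_r1.ratCast_mul (by norm_num)
  refine irr_sum_of_eq h ?_; push_cast; ring
lemma irr22 : Irrational (r2 + r2) := by
  have h : Irrational ((2:ℚ)*r2) := irr_r2.ratCast_mul (by norm_num)
  refine irr_sum_of_eq h ?_; push_cast; ring
lemma irr33 : Irrational (r3 + r3) := by
  have h : Irrational ((2:ℚ)*r3) := irr_r3.ratCast_mul (by norm_num)
  refine irr_sum_of_eq h ?_; push_cast; ring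
lemma irr44 : Irrational (r4 + r4) := by
  have h : Irrational ((2:ℚ)*r4) := irr_r4.ratCast_mul (by norm_num)
  refine irr_sum_of_eq h ?_; push_cast; ring

lemma χ_monic : χ.Monic := by unfold χ; monicity!
lemma χ_natDegree : χ.natDegree = 4 := by unfold χ; compute_degree!
lemma χ_ne : χ ≠ 0 := χ_monic.ne_zero

noncomputable def χR : ℝ[X] := χ.map (algebraMap ℚ ℝ)
lemma χR_eq : χR = X ^ 4 - 18 * X ^ 3 + 43 * X ^ 2 - 18 * X + 1 := by
  unfold χR χ
  simp [Polynomial.map_add, Polynomial.map_sub, Polynomial.map_mul, Polynomial.map_pow,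
    Polynomial.map_ofNat]
lemma χR_monic : χR.Monic := χ_monic.map _
lemma χR_natDegree : χR.natDegree = 4 := by
  have := χ.natDegree_map (algebraMap ℚ ℝ)
  rw [χ_natDegree] at this
  exact this
lemma χR_ne : χR ≠ 0 := χR_monic.ne_zero

lemma eval_χR (x : ℝ) : χR.eval x = x^4 - 18*x^3 + 43*x^2 - 18*x + 1 := by
  rw [χR_eq]; simp
lemma root_iff (x : ℝ) : χR.eval x = 0 ↔ (x = r1 ∨ x = r2 ∨ x = r3 ∨ x = r4) := by
  rw [eval_χR, fact_eq, mul_eq_zero, mul_eq_zero, mul_eq_zero, sub_eq_zero, sub_eq_zero,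
    sub_eq_zero, sub_eq_zero]
  tauto

lemma roots_toFinset : χR.roots.toFinset = {r1, r2, r3, r4} := by
  ext x
  simp [Multiset.mem_toFinset, mem_roots', χR_ne, IsRoot, root_iff x]
lemma finset_card : ({r1,r2,r3,r4} : Finset ℝ).card = 4 := by
  rw [Finset.card_insert_of_notMem (by simp [d12, d13, d14]),
      Finset.card_insert_of_notMem (by simp [d23, d24]),
      Finset.card_insert_of_notMem (by simp [d34]), Finset.card_singleton]
lemma conj2 : χR.roots.toFinset.card = 4 := by rw [roots_toFinset, finset_card]
lemma roots_card : χR.roots.card = 4 := by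
  refine le_antisymm (χR_natDegree ▸ χR.card_roots') ?_
  calc 4 = χR.roots.toFinset.card := conj2.symm
  _ ≤ Multiset.card χR.roots := Multiset.toFinset_card_le _
lemma splits_id : χR.Splits :=
  splits_iff_card_roots.mpr (roots_card.trans χR_natDegree.symm)
lemma hsplits : (χ.map (algebraMap ℚ ℝ)).Splits := splits_id

noncomputable def K : IntermediateField ℚ ℝ :=
  IntermediateField.adjoin ℚ {Real.sqrt 2, Real.sqrt 5}
lemma hsK : s ∈ K := subset_adjoin ℚ _ (Set.mem_insert _ _)
lemma htK : t ∈ K := subset_adjoin ℚ _ (Set.mem_insert_of_mem _ rfl)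
lemma memK (a b c d : ℚ) : ((a:ℝ) + (b:ℝ)*s + (c:ℝ)*t + (d:ℝ)*(s*t)) ∈ K :=
  add_mem (add_mem (add_mem (SubfieldClass.ratCast_mem K a)
    (mul_mem (SubfieldClass.ratCast_mem K b) hsK))
    (mul_mem (SubfieldClass.ratCast_mem K c) htK))
    (mul_mem (SubfieldClass.ratCast_mem K d) (mul_mem hsK htK))
lemma hr1K : r1 ∈ K := by
  rw [show r1 = ((9/2:ℚ):ℝ) + ((3:ℚ):ℝ)*s + ((3/2:ℚ):ℝ)*t + ((1:ℚ):ℝ)*(s*t) from by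
    push_cast; unfold r1; ring]
  exact memK _ _ _ _
lemma hr2K : r2 ∈ K := by
  rw [show r2 = ((9/2:ℚ):ℝ) + ((3:ℚ):ℝ)*s + ((-3/2:ℚ):ℝ)*t + ((-1:ℚ):ℝ)*(s*t) from by
    push_cast; unfold r2; ring]
  exact memK _ _ _ _
lemma hr3K : r3 ∈ K := by
  rw [show r3 = ((9/2:ℚ):ℝ) + ((-3:ℚ):ℝ)*s + ((3/2:ℚ):ℝ)*t + ((-1:ℚ):ℝ)*(s*t) from by
    push_cast; unfold r3; ring]
  exact memK _ _ _ _
lemma hr4K : r4 ∈ K := by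
  rw [show r4 = ((9/2:ℚ):ℝ) + ((-3:ℚ):ℝ)*s + ((-3/2:ℚ):ℝ)*t + ((1:ℚ):ℝ)*(s*t) from by
    push_cast; unfold r4; ring]
  exact memK _ _ _ _

lemma hroot1 : aeval r1 χ = 0 := by
  have h : aeval r1 χ = r1^4 - 18*r1^3 + 43*r1^2 - 18*r1 + 1 := by
    unfold χ; simp [map_ofNat]
  rw [h, fact_eq]; ring
lemma hint : IsIntegral ℚ r1 := ⟨χ, χ_monic, by rw [← aeval_def]; exact hroot1⟩

lemma s_eq : s = ((-25/18 : ℚ):ℝ) + ((-4/9:ℚ):ℝ)*r1 + ((8/9:ℚ):ℝ)*r1^2 + ((-1/18:ℚ):ℝ)*r1^3 := by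
  push_cast
  unfold r1
  linear_combination ((-5/4 : ℝ) + (17/12 : ℝ)*t + (49/36 : ℝ)*t^2 + (1/4 : ℝ)*t^3 + (3/2 : ℝ)*s + (3/2 : ℝ)*s*t + (1/2 : ℝ)*s*t^2 + (1/18 : ℝ)*s*t^3) * hs + ((347/144 : ℝ) + (11/16 : ℝ)*t + (41/24 : ℝ)*s + (35/72 : ℝ)*s*t) * ht
lemma t_eq : t = ((-29/9 : ℚ):ℝ) + ((140/9:ℚ):ℝ)*r1 + ((-70/9:ℚ):ℝ)*r1^2 + ((4/9:ℚ):ℝ)*r1^3 := by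
  push_cast
  unfold r1
  linear_combination ((16 : ℝ) + (-22/3 : ℝ)*t + (-92/9 : ℝ)*t^2 + (-2 : ℝ)*t^3 + (-12 : ℝ)*s + (-12 : ℝ)*s*t + (-4 : ℝ)*s*t^2 + (-4/9 : ℝ)*s*t^3) * hs + ((-148/9 : ℝ) + (-11/2 : ℝ)*t + (-35/3 : ℝ)*s + (-35/9 : ℝ)*s*t) * ht

lemma hsE : s ∈ ℚ⟮r1⟯ := by
  have hg : r1 ∈ ℚ⟮r1⟯ := mem_adjoin_simple_self ℚ r1
  rw [s_eq]
  exact add_mem (add_mem (add_mem (SubfieldClass.ratCast_mem _ _)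
    (mul_mem (SubfieldClass.ratCast_mem _ _) hg))
    (mul_mem (SubfieldClass.ratCast_mem _ _) (pow_mem hg 2)))
    (mul_mem (SubfieldClass.ratCast_mem _ _) (pow_mem hg 3))
lemma htE : t ∈ ℚ⟮r1⟯ := by
  have hg : r1 ∈ ℚ⟮r1⟯ := mem_adjoin_simple_self ℚ r1
  rw [t_eq]
  exact add_mem (add_mem (add_mem (SubfieldClass.ratCast_mem _ _)
    (mul_mem (SubfieldClass.ratCast_mem _ _) hg))
    (mul_mem (SubfieldClass.ratCast_mem _ _) (pow_mem hg 2)))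
    (mul_mem (SubfieldClass.ratCast_mem _ _) (pow_mem hg 3))
lemma E_eq : ℚ⟮r1⟯ = K := by
  refine le_antisymm (adjoin_simple_le_iff.mpr hr1K) (adjoin_le_iff.mpr ?_)
  rintro x (rfl | hx)
  · exact hsE
  · rcases hx with rfl
    exact htE

lemma irr21 : Irrational (r2 + r1) := add_comm r1 r2 ▸ irr12
lemma irr31 : Irrational (r3 + r1) := add_comm r1 r3 ▸ irr13
lemma irr41 : Irrational (r4 + r1) := add_comm r1 r4 ▸ irr14
lemma irr32 : Irrational (r3 + r2) := add_comm r2 r3 ▸ irr23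
lemma irr42 : Irrational (r4 + r2) := add_comm r2 r4 ▸ irr24
lemma irr43 : Irrational (r4 + r3) := add_comm r3 r4 ▸ irr34

lemma χ_irred : Irreducible χ := by
  have hmdvd : minpoly ℚ r1 ∣ χ := minpoly.dvd ℚ r1 hroot1
  set m := minpoly ℚ r1 with hm
  have hmmonic : m.Monic := minpoly.monic hint
  have hmaeval : aeval r1 m = 0 := minpoly.aeval ℚ r1
  obtain ⟨c, hc⟩ := hmdvd
  have hmne : m ≠ 0 := hmmonic.ne_zero
  have hcne : c ≠ 0 := by rintro rfl; rw [mul_zero] at hc; exact χ_ne hc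
  have hcmonic : c.Monic := by
    have h2 : (m * c).Monic := hc ▸ χ_monic
    exact hmmonic.of_mul_monic_left h2
  have hdeg : m.natDegree + c.natDegree = 4 := by
    have h3 := natDegree_mul hmne hcne
    rw [← hc, χ_natDegree] at h3
    omega
  have hpos : 0 < m.natDegree := minpoly.natDegree_pos hint
  have h14 : m.natDegree = 1 ∨ m.natDegree = 2 ∨ m.natDegree = 3 ∨ m.natDegree = 4 := by omega
  rcases h14 with hd | hd | hd | hd
  · -- degree 1 : r1 rational, contradiction
    exfalso
    have hX := hmmonic.eq_X_add_C hd
    rw [hX] at hmaeval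
    simp only [map_add, aeval_X, aeval_C] at hmaeval
    rw [eq_ratCast] at hmaeval
    exact irr_r1 ⟨-(m.coeff 0), by push_cast; linarith⟩
  · -- degree 2 : quadratic factor, contradiction via irrational sums
    exfalso
    have hmR : m.map (algebraMap ℚ ℝ) ∣ χR :=
      Polynomial.map_dvd (algebraMap ℚ ℝ) (Dvd.intro c hc.symm)
    have hmRmonic : (m.map (algebraMap ℚ ℝ)).Monic := hmmonic.map _
    have hmRdeg : (m.map (algebraMap ℚ ℝ)).natDegree = 2 := by
      rw [natDegree_map]; exact hd
    have hmRsplits : (m.map (algebraMap ℚ ℝ)).Splits :=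
      splits_id.of_dvd χR_ne hmR
    have hcard2 : Multiset.card (m.map (algebraMap ℚ ℝ)).roots = 2 := by
      rw [splits_iff_card_roots.mp hmRsplits, hmRdeg]
    obtain ⟨u, v, huv⟩ := Multiset.card_eq_two.mp hcard2
    have hsub : ∀ x ∈ (m.map (algebraMap ℚ ℝ)).roots, x = r1 ∨ x = r2 ∨ x = r3 ∨ x = r4 := by
      intro x hx
      have hx2 : x ∈ χR.roots := Multiset.subset_of_le (roots.le_of_dvd χR_ne hmR) hx
      exact (root_iff x).mp (mem_roots'.mp hx2).2
    have hu := hsub u (by rw [huv]; simp)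
    have hv := hsub v (by rw [huv]; simp)
    have hfac : m.map (algebraMap ℚ ℝ) = (X - C u) * (X - C v) := by
      have h0 := hmRsplits.eq_prod_roots_of_monic hmRmonic
      rw [huv] at h0
      simpa using h0
    have hco : algebraMap ℚ ℝ (m.coeff 1) = -(u + v) := by
      have h1 : (m.map (algebraMap ℚ ℝ)).coeff 1 = algebraMap ℚ ℝ (m.coeff 1) := coeff_map _ _
      rw [hfac] at h1
      rw [← h1, show (X - C u) * (X - C v) = X^2 - C (u+v) * X + C (u*v) from by
        rw [C_add, C_mul]; ring]
      simp [coeff_X_pow, coeff_C]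
    have hsum : u + v = ((-(m.coeff 1) : ℚ) : ℝ) := by
      rw [eq_ratCast] at hco; push_cast; linarith
    rcases hu with rfl | rfl | rfl | rfl <;> rcases hv with rfl | rfl | rfl | rfl
    all_goals first
      | exact irr11.ne_rat _ hsum | exact irr22.ne_rat _ hsum | exact irr33.ne_rat _ hsum
      | exact irr44.ne_rat _ hsum | exact irr12.ne_rat _ hsum | exact irr13.ne_rat _ hsum
      | exact irr14.ne_rat _ hsum | exact irr23.ne_rat _ hsum | exact irr24.ne_rat _ hsum
      | exact irr34.ne_rat _ hsum | exact irr21.ne_rat _ hsum | exact irr31.ne_rat _ hsum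
      | exact irr41.ne_rat _ hsum | exact irr32.ne_rat _ hsum | exact irr42.ne_rat _ hsum
      | exact irr43.ne_rat _ hsum
  · -- degree 3 : rational root, contradiction
    exfalso
    have hcd : c.natDegree = 1 := by omega
    have hX := hcmonic.eq_X_add_C hcd
    set b := c.coeff 0 with hb
    have hev : χ.eval (-b) = 0 := by
      rw [hc, eval_mul, hX]
      simp
    have hevR : χR.eval ((algebraMap ℚ ℝ) (-b)) = 0 := by
      unfold χR
      rw [Polynomial.eval_map, Polynomial.eval₂_at_apply, hev, map_zero]
    have := (root_iff _).mp hevR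
    rw [eq_ratCast] at this
    rcases this with h | h | h | h
    · exact irr_r1 ⟨-b, h⟩
    · exact irr_r2 ⟨-b, h⟩
    · exact irr_r3 ⟨-b, h⟩
    · exact irr_r4 ⟨-b, h⟩
  · -- degree 4 : m = χ
    have hcd : c.natDegree = 0 := by omega
    have hc1 : c = 1 := hcmonic.natDegree_eq_zero.mp hcd
    have : m = χ := by rw [hc, hc1, mul_one]
    exact this ▸ minpoly.irreducible hint

lemma hmin : minpoly ℚ r1 = χ := (minpoly.eq_of_irreducible_of_monic χ_irred hroot1 χ_monic).symm

lemma hFD : FiniteDimensional ℚ ↥K := E_eq ▸ IntermediateField.adjoin.finiteDimensional hint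
lemma hfinrank : Module.finrank ℚ ↥K = 4 := by
  rw [← E_eq, IntermediateField.adjoin.finrank hint, hmin, χ_natDegree]

noncomputable def theEquiv : AdjoinRoot χ ≃ₐ[ℚ] ↥K :=
  (hmin ▸ IntermediateField.adjoinRootEquivAdjoin ℚ hint).trans (IntermediateField.equivOfEq E_eq)

lemma hrootSet : χ.rootSet ℝ = {r1, r2, r3, r4} := by
  ext x
  rw [mem_rootSet]
  simp only [Set.mem_insert_iff, Set.mem_singleton_iff]
  constructor
  · rintro ⟨-, h⟩
    have h2 : χR.eval x = 0 := by unfold χR; rw [Polynomial.eval_map, ← aeval_def]; exact h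
    exact (root_iff x).mp h2
  · intro h
    refine ⟨χ_ne, ?_⟩
    have h2 : χR.eval x = 0 := (root_iff x).mpr h
    unfold χR at h2; rwa [Polynomial.eval_map, ← aeval_def] at h2

lemma hadjoinRoots : IntermediateField.adjoin ℚ (χ.rootSet ℝ) = K := by
  rw [hrootSet]
  refine le_antisymm (adjoin_le_iff.mpr ?_) ?_
  · intro x hx
    simp only [Set.mem_insert_iff, Set.mem_singleton_iff] at hx
    rcases hx with rfl | rfl | rfl | rfl
    · exact hr1K
    · exact hr2K
    · exact hr3K
    · exact hr4K
  · have h1 : ℚ⟮r1⟯ ≤ IntermediateField.adjoin ℚ {r1, r2, r3, r4} :=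
      adjoin_simple_le_iff.mpr (subset_adjoin ℚ _ (Set.mem_insert _ _))
    exact E_eq ▸ h1

lemma hSF : IsSplittingField ℚ ↥K χ :=
  hadjoinRoots ▸ IntermediateField.adjoin_rootSet_isSplittingField hsplits

lemma hGalois : IsGalois ℚ ↥K := by
  haveI := hSF
  exact IsGalois.of_separable_splitting_field χ_irred.separable

noncomputable def sK : ↥K := ⟨s, hsK⟩
noncomputable def tK : ↥K := ⟨t, htK⟩

lemma sK_sq : sK * sK = algebraMap ℚ ↥K 2 := by
  apply Subtype.ext
  show s * s = ((algebraMap ℚ ↥K 2 : ↥K) : ℝ)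
  calc s * s = (2:ℝ) := by nlinarith [hs]
  _ = algebraMap ℚ ℝ 2 := by norm_num
  _ = algebraMap ↥K ℝ (algebraMap ℚ ↥K 2) := IsScalarTower.algebraMap_apply ℚ ↥K ℝ 2
  _ = ((algebraMap ℚ ↥K 2 : ↥K) : ℝ) := by rw [IntermediateField.algebraMap_apply]

lemma tK_sq : tK * tK = algebraMap ℚ ↥K 5 := by
  apply Subtype.ext
  show t * t = ((algebraMap ℚ ↥K 5 : ↥K) : ℝ)
  calc t * t = (5:ℝ) := by nlinarith [ht]
  _ = algebraMap ℚ ℝ 5 := by norm_num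
  _ = algebraMap ↥K ℝ (algebraMap ℚ ↥K 5) := IsScalarTower.algebraMap_apply ℚ ↥K ℝ 5
  _ = ((algebraMap ℚ ↥K 5 : ↥K) : ℝ) := by rw [IntermediateField.algebraMap_apply]

lemma sigma_fix_s (σ : ↥K ≃ₐ[ℚ] ↥K) : σ (σ sK) = sK := by
  have h2 : σ sK * σ sK = sK * sK := by
    rw [← map_mul, sK_sq, AlgEquiv.commutes, ← sK_sq]
  rcases mul_self_eq_mul_self_iff.mp h2 with h | h
  · rw [h, h]
  · rw [h, map_neg, h, neg_neg]

lemma sigma_fix_t (σ : ↥K ≃ₐ[ℚ] ↥K) : σ (σ tK) = tK := by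
  have h2 : σ tK * σ tK = tK * tK := by
    rw [← map_mul, tK_sq, AlgEquiv.commutes, ← tK_sq]
  rcases mul_self_eq_mul_self_iff.mp h2 with h | h
  · rw [h, h]
  · rw [h, map_neg, h, neg_neg]

lemma sq_eq_one (σ : ↥K ≃ₐ[ℚ] ↥K) : σ * σ = 1 := by
  have hext : (σ * σ : ↥K ≃ₐ[ℚ] ↥K).toAlgHom = (1 : ↥K ≃ₐ[ℚ] ↥K).toAlgHom := by
    apply IntermediateField.adjoin_algHom_ext ℚ
    intro x hx
    rcases hx with rfl | hx
    · show (σ * σ) sK = (1 : ↥K ≃ₐ[ℚ] ↥K) sK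
      rw [AlgEquiv.mul_apply, AlgEquiv.one_apply]
      exact sigma_fix_s σ
    · rcases hx with rfl
      show (σ * σ) tK = (1 : ↥K ≃ₐ[ℚ] ↥K) tK
      rw [AlgEquiv.mul_apply, AlgEquiv.one_apply]
      exact sigma_fix_t σ
  ext x
  have h3 := AlgHom.congr_fun hext x
  simpa using h3

lemma hcardGal : Nat.card (↥K ≃ₐ[ℚ] ↥K) = 4 := by
  haveI := hFD; haveI := hGalois
  rw [IsGalois.card_aut_eq_finrank, hfinrank]

lemma hexpGal : Monoid.exponent (↥K ≃ₐ[ℚ] ↥K) = 2 := by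
  have hdvd : Monoid.exponent (↥K ≃ₐ[ℚ] ↥K) ∣ 2 :=
    Monoid.exponent_dvd_of_forall_pow_eq_one fun σ => by rw [pow_two]; exact sq_eq_one σ
  rcases (Nat.dvd_prime Nat.prime_two).mp hdvd with h1 | h2
  · exfalso
    have hall : ∀ g : (↥K ≃ₐ[ℚ] ↥K), g = 1 := fun g => by
      have h4 := Monoid.pow_exponent_eq_one g
      rwa [h1, pow_one] at h4
    haveI : Subsingleton (↥K ≃ₐ[ℚ] ↥K) := ⟨fun a b => by rw [hall a, hall b]⟩
    have h5 : Nat.card (↥K ≃ₐ[ℚ] ↥K) = 1 := Nat.card_eq_one_iff_unique.mpr ⟨this, ⟨AlgEquiv.refl⟩⟩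
    rw [hcardGal] at h5
    omega
  · exact h2

end S7


/-- The polynomial `χ = 1 − 18x + 43x² − 18x³ + x⁴` is irreducible over `ℚ`, has
four distinct real roots, and `ℚ[x]/(χ)` is isomorphic to `ℚ(√2, √5)`, which is
Galois over `ℚ` with Galois group `ℤ/2 × ℤ/2`. -/
theorem statement_7 :
    Irreducible ((X : ℚ[X]) ^ 4 - 18 * X ^ 3 + 43 * X ^ 2 - 18 * X + 1) ∧
    ((((X : ℚ[X]) ^ 4 - 18 * X ^ 3 + 43 * X ^ 2 - 18 * X + 1).map
        (algebraMap ℚ ℝ)).roots.toFinset.card = 4) ∧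
    Nonempty
      (AdjoinRoot ((X : ℚ[X]) ^ 4 - 18 * X ^ 3 + 43 * X ^ 2 - 18 * X + 1) ≃ₐ[ℚ]
        ↥(IntermediateField.adjoin ℚ ({Real.sqrt 2, Real.sqrt 5} : Set ℝ))) ∧
    IsGalois ℚ ↥(IntermediateField.adjoin ℚ ({Real.sqrt 2, Real.sqrt 5} : Set ℝ)) ∧
    Nonempty
      ((↥(IntermediateField.adjoin ℚ ({Real.sqrt 2, Real.sqrt 5} : Set ℝ)) ≃ₐ[ℚ]
          ↥(IntermediateField.adjoin ℚ ({Real.sqrt 2, Real.sqrt 5} : Set ℝ))) ≃*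
        Multiplicative (ZMod 2 × ZMod 2)) := by
  refine ⟨S7.χ_irred, S7.conj2, ⟨S7.theEquiv⟩, S7.hGalois, ?_⟩
  haveI : IsKleinFour
      (↥(IntermediateField.adjoin ℚ ({Real.sqrt 2, Real.sqrt 5} : Set ℝ)) ≃ₐ[ℚ]
        ↥(IntermediateField.adjoin ℚ ({Real.sqrt 2, Real.sqrt 5} : Set ℝ))) :=
    ⟨S7.hcardGal, S7.hexpGal⟩
  exact IsKleinFour.nonempty_mulEquiv
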